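/- Let f : S → A be a homomorphism of commutative Noetherian rings such that A is finitely generated as an S-module, let M be a finitely generated A-module, and let Q ⊆ M be an A-submodule that is primary, i.e. Ass_A(M/Q) = {P} for a single prime P of A. Then Q is primary as an S-submodule with Ass_S(M/Q) = { f⁻¹(P) }; moreover f⁻¹(P) is the radical of the annihilator Ann_S(M/Q). -/

import Mathlib

open LinearMap in
/-- If `Ass_A(N) = {P}` over a Noetherian ring, then `P` is the radical of the
annihilator of `N`. -/
theorem rad_ann_of_ass_singleton {A : Type*} [CommRing A] [IsNoetherianRing A]
    (N : Type*) [AddCommGroup N] [Module A N] [Module.Finite A N]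
    (P : Ideal A) (hP : P.IsPrime) (hQ : associatedPrimes A N = {P}) :
    P = (Module.annihilator A N).radical := by
  have hPass : IsAssociatedPrime P N := by
    rw [← AssociatedPrimes.mem_iff, hQ]; rfl
  obtain ⟨-, x, hx⟩ := isAssociatedPrime_iff.mp hPass
  rw [Submodule.bot_colon'] at hx
  apply le_antisymm
  · -- P ≤ radical ann
    intro a ha
    set f : N →ₗ[A] N := LinearMap.lsmul A N a with hf
    have hfp : ∀ (n : ℕ) (y : N), (f ^ n) y = a ^ n • y := by
      intro n
      induction n with
      | zero => intro y; simp
      | succ n ih =>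
        intro y
        rw [pow_succ, pow_succ, Module.End.mul_apply, ih, hf, LinearMap.lsmul_apply,
          mul_smul]
    obtain ⟨n, hn⟩ := ((Module.End.eventually_disjoint_ker_pow_range_pow f).and
      (Filter.eventually_ge_atTop 1)).exists
    obtain ⟨hdisj, hn1⟩ := hn
    have hrange : LinearMap.range (f ^ n) = ⊥ := by
      by_contra hne
      have : Nontrivial ↥(LinearMap.range (f ^ n)) :=
        Submodule.nontrivial_iff_ne_bot.mpr hne
      obtain ⟨P', hP'⟩ := associatedPrimes.nonempty A ↥(LinearMap.range (f ^ n))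
      have hP'' : IsAssociatedPrime P' N :=
        hP'.map_of_injective (LinearMap.range (f ^ n)).subtype Subtype.coe_injective
      have : P' = P := by
        have := hQ ▸ (AssociatedPrimes.mem_iff.mpr hP'')
        simpa using this
      subst this
      obtain ⟨hPprime, z, hz⟩ := isAssociatedPrime_iff.mp hP'
      rw [Submodule.bot_colon'] at hz
      have hz0 : z ≠ 0 := by
        rintro rfl
        rw [Submodule.span_zero_singleton, Submodule.annihilator_bot] at hz
        exact hPprime.ne_top hz
      have haz : a • z = 0 := by
        rw [← Submodule.mem_annihilator_span_singleton, ← hz]; exact ha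
      have haz' : a • (z : N) = 0 := by
        have := congrArg (Subtype.val) haz
        simpa using this
      have hker : (z : N) ∈ LinearMap.ker (f ^ n) := by
        have h1 : (z : N) ∈ LinearMap.ker f := by
          simpa [hf] using haz'
        have h2 : ∀ w ∈ LinearMap.ker f, w ∈ LinearMap.ker (f ^ n) := by
          obtain ⟨m, rfl⟩ : ∃ m, n = m + 1 := ⟨n - 1, by omega⟩
          intro w hw
          rw [LinearMap.mem_ker, pow_succ, Module.End.mul_apply,
            LinearMap.mem_ker.mp hw, map_zero]
        exact h2 _ h1
      exact hz0 (Submodule.coe_eq_zero.mp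
        (Submodule.disjoint_def.mp hdisj _ hker z.2))
    have : a ^ n ∈ Module.annihilator A N := by
      rw [Module.mem_annihilator]
      intro m
      have : (f ^ n) m = 0 := by
        rw [LinearMap.range_eq_bot.mp hrange]; rfl
      rwa [hfp] at this
    exact ⟨n, this⟩
  · -- radical ann ≤ P
    rw [← hP.radical]
    apply Ideal.radical_mono
    intro a ha
    rw [hx, Submodule.mem_annihilator_span_singleton]
    exact Module.mem_annihilator.mp ha x


/-- Let `f : S → A` be a homomorphism of commutative Noetherian rings
(encoded as an `Algebra S A` structure, so `f = algebraMap S A`) with `A` finitely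
generated as an `S`-module, `M` a finitely generated `A`-module, and `Q ⊆ M` an
`A`-submodule which is primary, i.e. `Ass_A(M/Q) = {P}` for a single prime `P`.
Then `Q` is primary as an `S`-submodule with `Ass_S(M/Q) = {f⁻¹(P)}`; moreover
`f⁻¹(P)` is the radical of the annihilator `Ann_S(M/Q)`. -/
theorem primary_comap {S A : Type*} [CommRing S] [CommRing A]
    [IsNoetherianRing S] [IsNoetherianRing A] [Algebra S A] [Module.Finite S A]
    (M : Type*) [AddCommGroup M] [Module A M] [Module S M] [IsScalarTower S A M]
    [Module.Finite A M] (Q : Submodule A M) (P : Ideal A) (hP : P.IsPrime)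
    (hQ : associatedPrimes A (M ⧸ Q) = {P}) :
    associatedPrimes S (M ⧸ Q) = {P.comap (algebraMap S A)} ∧
      P.comap (algebraMap S A) = (Module.annihilator S (M ⧸ Q)).radical := by
  have hrad : P = (Module.annihilator A (M ⧸ Q)).radical :=
    rad_ann_of_ass_singleton (M ⧸ Q) P hP hQ
  have hann : Module.annihilator S (M ⧸ Q) =
      (Module.annihilator A (M ⧸ Q)).comap (algebraMap S A) := by
    ext s
    simp only [Ideal.mem_comap, Module.mem_annihilator]
    constructor <;> intro h m
    · rw [algebraMap_smul]; exact h m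
    · rw [← algebraMap_smul A s m]; exact h m
  have hcomap : P.comap (algebraMap S A) = (Module.annihilator S (M ⧸ Q)).radical := by
    rw [hann, ← Ideal.comap_radical, ← hrad]
  refine ⟨?_, hcomap⟩
  have hPass : IsAssociatedPrime P (M ⧸ Q) := by
    rw [← AssociatedPrimes.mem_iff, hQ]; rfl
  obtain ⟨-, x, hx⟩ := isAssociatedPrime_iff.mp hPass
  rw [Submodule.bot_colon'] at hx
  apply Set.eq_singleton_iff_unique_mem.mpr
  constructor
  · refine isAssociatedPrime_iff.mpr ⟨hP.comap _, x, ?_⟩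
    rw [Submodule.bot_colon']
    ext s
    rw [Ideal.mem_comap, hx, Submodule.mem_annihilator_span_singleton,
      algebraMap_smul, Submodule.mem_annihilator_span_singleton]
  · rintro q hq
    obtain ⟨hqprime, y, hy⟩ := isAssociatedPrime_iff.mp hq
    rw [Submodule.bot_colon'] at hy
    have hy0 : y ≠ 0 := by
      rintro rfl
      rw [Submodule.span_zero_singleton, Submodule.annihilator_bot] at hy
      exact hqprime.ne_top hy
    apply le_antisymm
    · -- q ≤ comap P
      intro s hs
      rw [Ideal.mem_comap]
      obtain ⟨P', hP', hle⟩ :=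
        exists_le_isAssociatedPrime_of_isNoetherianRing A y hy0
      rw [Submodule.bot_colon'] at hle
      have hPP : P' = P := by
        have := hQ ▸ (AssociatedPrimes.mem_iff.mpr hP')
        simpa using this
      subst hPP
      apply hle
      rw [Submodule.mem_annihilator_span_singleton, algebraMap_smul]
      exact (Submodule.mem_annihilator_span_singleton y s).mp (hy ▸ hs)
    · rw [hcomap]
      have hle : Module.annihilator S (M ⧸ Q) ≤ q := by
        rw [hy]
        intro s hs
        rw [Submodule.mem_annihilator_span_singleton]
        exact Module.mem_annihilator.mp hs y
      calc (Module.annihilator S (M ⧸ Q)).radical ≤ q.radical := Ideal.radical_mono hle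
        _ = q := hqprime.radical
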